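/- arXiv:2510.11571 — 4 statements merged into one kernel-verified Lean document; each statement's English description precedes it below -/
import Mathlib

section
/- With the partition setup below, X ≥ ℓ_k²/4 for every k ∈ {1, …, m}; in particular X > 0, i.e. min_{α ∈ [0,1]} h(α) < 0. -/
open Set MeasureTheory intervalIntegral
open scoped Interval

/-- with `0 = a_0 < a_1 < … < a_m = 1`, `g : [0,1] → {−1,+1}` constant on each
open interval `(a_{k−1}, a_k)` of length `ℓ_k`, `h(α) = ∫_0^α g(z) z dz + ∫_α^1 g(z)(z−1) dz`
and `X = −min_{[0,1]} h`, one has `X ≥ ℓ_k²/4` for every `k`; in particular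
`min_{[0,1]} h < 0`. -/
theorem stmt_10 (m : ℕ) (hm : 1 ≤ m) (a : ℕ → ℝ)
    (ha0 : a 0 = 0) (ham : a m = 1) (hmono : ∀ k < m, a k < a (k + 1))
    (g : ℝ → ℝ) (hg : ∀ z ∈ Set.Icc (0 : ℝ) 1, g z = 1 ∨ g z = -1)
    (hconst : ∀ k < m, ∀ z ∈ Set.Ioo (a k) (a (k + 1)),
      ∀ w ∈ Set.Ioo (a k) (a (k + 1)), g z = g w)
    (h : ℝ → ℝ)
    (hh : ∀ α, h α = (∫ z in (0 : ℝ)..α, g z * z) + ∫ z in α..(1 : ℝ), g z * (z - 1))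
    (X : ℝ) (hX : X = -sInf (h '' Set.Icc (0 : ℝ) 1)) :
    (∀ k < m, (a (k + 1) - a k) ^ 2 / 4 ≤ X) ∧ sInf (h '' Set.Icc (0 : ℝ) 1) < 0 := by
  -- monotonicity of the partition
  have amono : ∀ i j : ℕ, i ≤ j → j ≤ m → a i ≤ a j := by
    intro i j hij hjm
    induction j with
    | zero => interval_cases i; rfl
    | succ n ih =>
      rcases Nat.lt_or_ge i (n + 1) with hlt | hge
      · exact (ih (Nat.lt_succ_iff.mp hlt) (le_trans (Nat.le_succ n) hjm)).trans
          (hmono n (Nat.lt_of_succ_le hjm)).le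
      · have : i = n + 1 := le_antisymm hij hge
        simp [this]
  have amem : ∀ k ≤ m, a k ∈ Icc (0 : ℝ) 1 := by
    intro k hk
    exact ⟨ha0 ▸ amono 0 k (Nat.zero_le _) hk, ham ▸ amono k m hk le_rfl⟩
  -- the constant value on each piece
  set c : ℕ → ℝ := fun k => g ((a k + a (k + 1)) / 2) with hc
  have hmid : ∀ k < m, (a k + a (k + 1)) / 2 ∈ Ioo (a k) (a (k + 1)) := by
    intro k hk
    have := hmono k hk
    constructor <;> [linarith; linarith]
  have gval : ∀ k < m, ∀ z ∈ Ioo (a k) (a (k + 1)), g z = c k := by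
    intro k hk z hz
    exact hconst k hk z hz _ (hmid k hk)
  have cpm : ∀ k < m, c k = 1 ∨ c k = -1 := by
    intro k hk
    apply hg
    have h1 := (amem k hk.le).1
    have h2 := (amem (k + 1) hk).2
    have h3 := (hmid k hk)
    exact ⟨le_trans h1 h3.1.le, le_trans h3.2.le h2⟩
  -- a.e. equality with the constant on each piece
  have aeq0 : ∀ k < m, ∀ u v : ℝ, Ι u v ⊆ Icc (a k) (a (k + 1)) → ∀ f : ℝ → ℝ,
      (fun z => g z * f z) =ᵐ[volume.restrict (Ι u v)] fun z => c k * f z := by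
    intro k hk u v hsub f
    rw [Filter.EventuallyEq, ae_iff, Measure.restrict_apply' measurableSet_uIoc]
    refine measure_mono_null ?_
      (((Set.countable_singleton (a k)).union (Set.countable_singleton (a (k + 1)))).measure_zero _)
    rintro z ⟨hne, hz⟩
    by_contra hz'
    simp only [Set.mem_union, Set.mem_singleton_iff] at hz'
    push_neg at hz'
    have hzIcc := hsub hz
    have : z ∈ Ioo (a k) (a (k + 1)) :=
      ⟨lt_of_le_of_ne hzIcc.1 (Ne.symm hz'.1), lt_of_le_of_ne hzIcc.2 hz'.2⟩
    exact hne (by rw [gval k hk z this])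
  have hIsub : ∀ k < m, Ι (a k) (a (k + 1)) ⊆ Icc (a k) (a (k + 1)) := by
    intro k hk
    rw [uIoc_of_le (hmono k hk).le]
    exact Ioc_subset_Icc_self
  -- interval integrability of g · f on each piece and on [0,1]
  have Ipiece : ∀ k < m, ∀ f : ℝ → ℝ, Continuous f →
      IntervalIntegrable (fun z => g z * f z) volume (a k) (a (k + 1)) := by
    intro k hk f hf
    exact ((continuous_const.mul hf).intervalIntegrable _ _).congr_ae (aeq0 k hk _ _ (hIsub k hk) f).symm
  have Iupto : ∀ f : ℝ → ℝ, Continuous f → ∀ j ≤ m,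
      IntervalIntegrable (fun z => g z * f z) volume (a 0) (a j) := by
    intro f hf j hj
    induction j with
    | zero => exact IntervalIntegrable.refl
    | succ n ih =>
      exact (ih (le_trans (Nat.le_succ n) hj)).trans (Ipiece n (Nat.lt_of_succ_le hj) f hf)
  have Ig : IntervalIntegrable g volume 0 1 := by
    have := Iupto (fun _ => 1) continuous_const m le_rfl
    simp only [mul_one] at this
    rwa [ha0, ham] at this
  have Igz : IntervalIntegrable (fun z => g z * z) volume 0 1 := by
    have := Iupto (fun z => z) continuous_id m le_rfl
    rwa [ha0, ham] at this
  have Igz1 : IntervalIntegrable (fun z => g z * (z - 1)) volume 0 1 := by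
    have := Iupto (fun z => z - 1) (continuous_id.sub continuous_const) m le_rfl
    rwa [ha0, ham] at this
  have subI : ∀ {α β : ℝ}, α ∈ Icc (0 : ℝ) 1 → β ∈ Icc (0 : ℝ) 1 →
      uIcc α β ⊆ uIcc (0 : ℝ) 1 := by
    intro α β hα hβ
    rw [uIcc_of_le zero_le_one]
    exact uIcc_subset_Icc hα hβ
  -- difference formula for h
  have hdiff : ∀ α ∈ Icc (0 : ℝ) 1, ∀ β ∈ Icc (0 : ℝ) 1,
      h β - h α = ∫ z in α..β, g z := by
    intro α hα β hβ
    have h01 : (0 : ℝ) ∈ Icc (0 : ℝ) 1 := by norm_num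
    have h11 : (1 : ℝ) ∈ Icc (0 : ℝ) 1 := by norm_num
    have I1 : IntervalIntegrable (fun z => g z * z) volume 0 α := Igz.mono_set (subI h01 hα)
    have I2 : IntervalIntegrable (fun z => g z * z) volume 0 β := Igz.mono_set (subI h01 hβ)
    have I3 : IntervalIntegrable (fun z => g z * (z - 1)) volume β 1 := Igz1.mono_set (subI hβ h11)
    have I4 : IntervalIntegrable (fun z => g z * (z - 1)) volume α β := Igz1.mono_set (subI hα hβ)
    have I5 : IntervalIntegrable (fun z => g z * z) volume α β := Igz.mono_set (subI hα hβ)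
    have e1 : (∫ z in (0:ℝ)..β, g z * z) - ∫ z in (0:ℝ)..α, g z * z = ∫ z in α..β, g z * z :=
      integral_interval_sub_left I2 I1
    have e2 : (∫ z in α..(1:ℝ), g z * (z - 1)) =
        (∫ z in α..β, g z * (z - 1)) + ∫ z in β..(1:ℝ), g z * (z - 1) :=
      (integral_add_adjacent_intervals I4 I3).symm
    have e3 : ∫ z in α..β, (g z * z - g z * (z - 1)) =
        (∫ z in α..β, g z * z) - ∫ z in α..β, g z * (z - 1) := integral_sub I5 I4
    have e5 : (∫ z in α..β, g z) = ∫ z in α..β, (g z * z - g z * (z - 1)) := by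
      apply integral_congr
      intro z _
      ring
    rw [hh α, hh β, e5, e3]
    linarith
  set G : ℝ → ℝ := fun α => ∫ t in (0 : ℝ)..α, g t with hGdef
  have hG : ∀ α ∈ Icc (0 : ℝ) 1, h α = h 0 + G α := by
    intro α hα
    have := hdiff 0 (by norm_num) α hα
    simp only [hGdef]
    linarith
  -- continuity of h and G on [0,1]
  have hlip : ∀ α ∈ Icc (0 : ℝ) 1, ∀ β ∈ Icc (0 : ℝ) 1, |h β - h α| ≤ |β - α| := by
    intro α hα β hβ
    rw [hdiff α hα β hβ]
    calc |∫ z in α..β, g z| ≤ 1 * |β - α| := by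
          rw [← Real.norm_eq_abs (∫ z in α..β, g z)]
          apply intervalIntegral.norm_integral_le_of_norm_le_const
          intro x hx
          have hx' : x ∈ Icc (0 : ℝ) 1 := by
            have := hIsub
            have h1 : Ι α β ⊆ uIcc α β := uIoc_subset_uIcc
            have := subI hα hβ (h1 hx)
            rwa [uIcc_of_le zero_le_one] at this
          rcases hg x hx' with h1 | h1 <;> rw [h1] <;> simp
      _ = |β - α| := one_mul _
  have hcont : ContinuousOn h (Icc (0 : ℝ) 1) := by
    have : LipschitzOnWith 1 h (Icc (0 : ℝ) 1) := by
      apply LipschitzOnWith.of_dist_le_mul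
      intro x hx y hy
      rw [Real.dist_eq, Real.dist_eq]
      simpa using hlip y hy x hx
    exact this.continuousOn
  have Gcont : ContinuousOn G (Icc (0 : ℝ) 1) := by
    apply ContinuousOn.congr (f := fun α => h α - h 0) (hcont.sub continuousOn_const)
    intro α hα
    have := hG α hα
    simp only [this]
    ring
  -- sInf is a lower bound
  have hbdd : BddBelow (h '' Icc (0 : ℝ) 1) :=
    (isCompact_Icc.image_of_continuousOn hcont).bddBelow
  set S : ℝ := sInf (h '' Icc (0 : ℝ) 1) with hSdef
  have hS_le : ∀ α ∈ Icc (0 : ℝ) 1, S ≤ h α := fun α hα => csInf_le hbdd ⟨α, hα, rfl⟩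
  -- affine formula for G on each piece
  have Gaff : ∀ k < m, ∀ α ∈ Icc (a k) (a (k + 1)), G α = G (a k) + c k * (α - a k) := by
    intro k hk α hα
    have h01 : (0 : ℝ) ∈ Icc (0 : ℝ) 1 := by norm_num
    have hk1 : a k ∈ Icc (0 : ℝ) 1 := amem k hk.le
    have hα1 : α ∈ Icc (0 : ℝ) 1 :=
      ⟨le_trans (amem k hk.le).1 hα.1, le_trans hα.2 (amem (k + 1) hk).2⟩
    have I1 : IntervalIntegrable g volume 0 (a k) := Ig.mono_set (subI h01 hk1)
    have I2 : IntervalIntegrable g volume 0 α := Ig.mono_set (subI h01 hα1)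
    have e1 : G α - G (a k) = ∫ z in (a k)..α, g z := integral_interval_sub_left I2 I1
    have hsub2 : Ι (a k) α ⊆ Icc (a k) (a (k + 1)) := by
      rw [uIoc_of_le hα.1]
      exact fun z hz => ⟨hz.1.le, hz.2.trans hα.2⟩
    have e2 : (∫ z in (a k)..α, g z) = ∫ z in (a k)..α, c k := by
      apply intervalIntegral.integral_congr_ae
      have := ae_imp_of_ae_restrict (aeq0 k hk (a k) α hsub2 (fun _ => 1))
      filter_upwards [this] with x hx hmem
      simpa using hx hmem
    rw [e2, intervalIntegral.integral_const, smul_eq_mul] at e1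
    linarith
  -- mean of h is zero
  have hmean : ∫ α in (0 : ℝ)..1, h α = 0 := by
    set P : ℝ → ℝ := fun α => G α * (α - 1) with hPdef
    have hsubIcc : ∀ k < m, Icc (a k) (a (k + 1)) ⊆ Icc (0 : ℝ) 1 := fun k hk =>
      Icc_subset_Icc (amem k hk.le).1 (amem (k + 1) hk).2
    have piece : ∀ k < m,
        ∫ α in (a k)..(a (k + 1)), (G α + g α * (α - 1)) = P (a (k + 1)) - P (a k) := by
      intro k hk
      have huv := (hmono k hk).le
      have e0 : ∫ α in (a k)..(a (k + 1)), (G α + g α * (α - 1)) =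
          ∫ α in (a k)..(a (k + 1)), (G α + c k * (α - 1)) := by
        apply intervalIntegral.integral_congr_ae
        have := ae_imp_of_ae_restrict (aeq0 k hk (a k) (a (k + 1)) (hIsub k hk) (fun z => z - 1))
        filter_upwards [this] with x hx hmem
        rw [hx hmem]
      rw [e0]
      apply integral_eq_sub_of_hasDeriv_right_of_le huv
      · exact (Gcont.mono (hsubIcc k hk)).mul
          ((continuous_id.sub continuous_const).continuousOn)
      · intro x hx
        have haff : HasDerivAt (fun t => (G (a k) + c k * (t - a k)) * (t - 1))
            (c k * 1 * (x - 1) + (G (a k) + c k * (x - a k)) * 1) x :=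
          ((((hasDerivAt_id x).sub_const (a k)).const_mul (c k)).const_add (G (a k))).mul
            ((hasDerivAt_id x).sub_const 1)
        have heq : P =ᶠ[nhds x] fun t => (G (a k) + c k * (t - a k)) * (t - 1) := by
          filter_upwards [isOpen_Ioo.mem_nhds hx] with t ht
          simp only [hPdef]
          rw [Gaff k hk t (Ioo_subset_Icc_self ht)]
        have hxG : G x = G (a k) + c k * (x - a k) := Gaff k hk x (Ioo_subset_Icc_self hx)
        have hd : HasDerivAt P (c k * 1 * (x - 1) + (G (a k) + c k * (x - a k)) * 1) x :=
          haff.congr_of_eventuallyEq heq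
        have : HasDerivAt P (G x + c k * (x - 1)) x := by
          convert hd using 1
          rw [hxG]; ring
        exact this.hasDerivWithinAt
      · apply ContinuousOn.intervalIntegrable
        rw [uIcc_of_le huv]
        exact (Gcont.mono (hsubIcc k hk)).add
          ((continuous_const.mul (continuous_id.sub continuous_const)).continuousOn)
    have hintpiece : ∀ k < m,
        IntervalIntegrable (fun α => G α + g α * (α - 1)) volume (a k) (a (k + 1)) := by
      intro k hk
      have hcf : IntervalIntegrable (fun α => G α + c k * (α - 1)) volume (a k) (a (k + 1)) := by
        apply ContinuousOn.intervalIntegrable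
        rw [uIcc_of_le (hmono k hk).le]
        exact (Gcont.mono (hsubIcc k hk)).add
          ((continuous_const.mul (continuous_id.sub continuous_const)).continuousOn)
      apply hcf.congr_ae
      exact (Filter.EventuallyEq.refl _ G).add (aeq0 k hk _ _ (hIsub k hk) (fun z => z - 1)).symm
    have hsum := intervalIntegral.sum_integral_adjacent_intervals (μ := volume)
      (f := fun α => G α + g α * (α - 1)) hintpiece
    rw [Finset.sum_congr rfl (fun k hk => piece k (Finset.mem_range.mp hk))] at hsum
    rw [Finset.sum_range_sub (fun k => P (a k)), ha0, ham] at hsum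
    have hG0 : G 0 = 0 := integral_same
    have hP10 : P 1 - P 0 = 0 := by simp [hPdef, hG0]
    have hGint : IntervalIntegrable G volume 0 1 := by
      apply ContinuousOn.intervalIntegrable
      rwa [uIcc_of_le zero_le_one]
    have hsum2 : (∫ α in (0:ℝ)..1, G α) + ∫ α in (0:ℝ)..1, g α * (α - 1) = 0 := by
      rw [← integral_add hGint Igz1, ← hsum]; exact hP10
    have h0eq : h 0 = ∫ z in (0:ℝ)..1, g z * (z - 1) := by
      rw [hh 0, integral_same]; ring
    have e6 : ∫ α in (0:ℝ)..1, h α = ∫ α in (0:ℝ)..1, (h 0 + G α) := by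
      apply integral_congr
      intro α hα
      rw [uIcc_of_le zero_le_one] at hα
      exact hG α hα
    rw [e6, integral_add intervalIntegrable_const hGint, intervalIntegral.integral_const,
      smul_eq_mul]
    rw [h0eq] at *
    linarith
  -- value of the integral of h on each piece
  have hsubIcc2 : ∀ k < m, Icc (a k) (a (k + 1)) ⊆ Icc (0 : ℝ) 1 := fun k hk =>
    Icc_subset_Icc (amem k hk.le).1 (amem (k + 1) hk).2
  have haff : ∀ k < m, ∀ α ∈ Icc (a k) (a (k + 1)), h α = h (a k) + c k * (α - a k) := by
    intro k hk α hα
    rw [hG α (hsubIcc2 k hk hα), Gaff k hk α hα,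
      hG (a k) (amem k hk.le)]
    ring
  have hval : ∀ k < m, ∫ α in (a k)..(a (k + 1)), h α =
      h (a k) * (a (k + 1) - a k) + c k * (a (k + 1) - a k) ^ 2 / 2 := by
    intro k hk
    have huv := (hmono k hk).le
    have e1 : ∫ α in (a k)..(a (k + 1)), h α =
        ∫ α in (a k)..(a (k + 1)), (h (a k) + c k * (α - a k)) := by
      apply integral_congr
      intro α hα
      rw [uIcc_of_le huv] at hα
      exact haff k hk α hα
    have Ic : IntervalIntegrable (fun α : ℝ => c k * (α - a k)) volume (a k) (a (k + 1)) :=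
      ((continuous_const.mul (continuous_id.sub continuous_const)).intervalIntegrable _ _)
    have e2 : ∫ α in (a k)..(a (k + 1)), (α - a k) = (a (k + 1) - a k) ^ 2 / 2 := by
      rw [integral_sub intervalIntegrable_id intervalIntegrable_const, integral_id,
        intervalIntegral.integral_const, smul_eq_mul]
      ring
    rw [e1, integral_add intervalIntegrable_const Ic, intervalIntegral.integral_const,
      intervalIntegral.integral_const_mul, e2, smul_eq_mul]
    ring
  have hlb : ∀ k < m, S * (a (k + 1) - a k) + (a (k + 1) - a k) ^ 2 / 2 ≤
      ∫ α in (a k)..(a (k + 1)), h α := by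
    intro k hk
    rw [hval k hk]
    have hu : a k ∈ Icc (0 : ℝ) 1 := amem k hk.le
    have hv : a (k + 1) ∈ Icc (0 : ℝ) 1 := amem (k + 1) hk
    have hSu := hS_le (a k) hu
    have hSv := hS_le (a (k + 1)) hv
    have hℓ : (0 : ℝ) ≤ a (k + 1) - a k := by linarith [hmono k hk]
    have hvu : h (a (k + 1)) = h (a k) + c k * (a (k + 1) - a k) :=
      haff k hk (a (k + 1)) (right_mem_Icc.2 (hmono k hk).le)
    rcases cpm k hk with hck | hck <;> rw [hck] at hvu ⊢
    · nlinarith [mul_nonneg (sub_nonneg.2 hSu) hℓ]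
    · nlinarith [mul_nonneg (sub_nonneg.2 hSv) hℓ]
  -- conclusion
  have key : ∀ k < m, (a (k + 1) - a k) ^ 2 / 2 ≤ X := by
    intro K hK
    have hIh : ∀ k < m, IntervalIntegrable h volume (a k) (a (k + 1)) := by
      intro k hk
      apply ContinuousOn.intervalIntegrable
      rw [uIcc_of_le (hmono k hk).le]
      exact hcont.mono (hsubIcc2 k hk)
    have hsumh := intervalIntegral.sum_integral_adjacent_intervals (μ := volume) (f := h) hIh
    rw [ha0, ham, hmean] at hsumh
    have hnn : ∀ k ∈ Finset.range m,
        0 ≤ (∫ α in (a k)..(a (k + 1)), h α) - S * (a (k + 1) - a k) := by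
      intro k hk
      have := hlb k (Finset.mem_range.mp hk)
      nlinarith [sq_nonneg (a (k + 1) - a k)]
    have hsingle : (a (K + 1) - a K) ^ 2 / 2 ≤
        ∑ k ∈ Finset.range m, ((∫ α in (a k)..(a (k + 1)), h α) - S * (a (k + 1) - a k)) := by
      calc (a (K + 1) - a K) ^ 2 / 2
          ≤ (∫ α in (a K)..(a (K + 1)), h α) - S * (a (K + 1) - a K) := by
            have := hlb K hK; linarith
        _ ≤ _ := Finset.single_le_sum hnn (Finset.mem_range.2 hK)
    have hsplit : ∑ k ∈ Finset.range m,
        ((∫ α in (a k)..(a (k + 1)), h α) - S * (a (k + 1) - a k)) = -S := by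
      rw [Finset.sum_sub_distrib, hsumh, ← Finset.mul_sum,
        Finset.sum_range_sub (fun k => a k), ha0, ham]
      ring
    rw [hsplit] at hsingle
    linarith [hX]
  constructor
  · intro k hk
    have := key k hk
    nlinarith [sq_nonneg (a (k + 1) - a k)]
  · have h0 := key 0 (by omega)
    have hl0 : 0 < a 1 - a 0 := by have := hmono 0 (by omega); linarith
    have : 0 < X := lt_of_lt_of_le (by positivity) h0
    rw [hX] at this
    linarith
end

section
/- With the partition setup below, ∑ over k with ℓ_k > X of (ℓ_k − X)² ≤ 2X; that is, there cannot be too many intervals of constancy with length much larger than X. -/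
open scoped Classical

open MeasureTheory

private lemma ae_ne_vol (y : ℝ) : ∀ᵐ (z : ℝ) ∂volume, z ≠ y := by
  refine ae_iff.mpr ?_
  simp

private lemma my_II_congr {x y : ℝ} (hxy : x ≤ y) {f f' : ℝ → ℝ}
    (hf' : IntervalIntegrable f' volume x y)
    (heq : ∀ z ∈ Set.Ioo x y, f z = f' z) :
    IntervalIntegrable f volume x y := by
  rw [intervalIntegrable_iff_integrableOn_Ioc_of_le hxy] at hf' ⊢
  refine hf'.congr ?_
  filter_upwards [ae_restrict_mem measurableSet_Ioc, ae_restrict_of_ae (ae_ne_vol y)]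
    with z hz hzy
  exact (heq z ⟨hz.1, lt_of_le_of_ne hz.2 hzy⟩).symm

private lemma my_int_congr {x y : ℝ} (hxy : x ≤ y) {f f' : ℝ → ℝ}
    (heq : ∀ z ∈ Set.Ioo x y, f z = f' z) :
    ∫ z in x..y, f z = ∫ z in x..y, f' z := by
  refine intervalIntegral.integral_congr_ae ?_
  filter_upwards [ae_ne_vol y] with z hzy hz
  rw [Set.uIoc_of_le hxy] at hz
  exact heq z ⟨hz.1, lt_of_le_of_ne hz.2 hzy⟩

/-- with the partition setup, `∑_{k : ℓ_k > X} (ℓ_k − X)² ≤ 2X`, where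
`ℓ_k = a_k − a_{k−1}` and `X = −min_{[0,1]} h`. -/
theorem stmt_11 (m : ℕ) (hm : 1 ≤ m) (a : ℕ → ℝ)
    (ha0 : a 0 = 0) (ham : a m = 1) (hmono : ∀ k < m, a k < a (k + 1))
    (g : ℝ → ℝ) (hg : ∀ z ∈ Set.Icc (0 : ℝ) 1, g z = 1 ∨ g z = -1)
    (hconst : ∀ k < m, ∀ z ∈ Set.Ioo (a k) (a (k + 1)),
      ∀ w ∈ Set.Ioo (a k) (a (k + 1)), g z = g w)
    (h : ℝ → ℝ)
    (hh : ∀ α, h α = (∫ z in (0 : ℝ)..α, g z * z) + ∫ z in α..(1 : ℝ), g z * (z - 1))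
    (X : ℝ) (hX : X = -sInf (h '' Set.Icc (0 : ℝ) 1)) :
    ∑ k ∈ (Finset.range m).filter (fun k => X < a (k + 1) - a k),
      (a (k + 1) - a k - X) ^ 2 ≤ 2 * X := by
  -- monotonicity facts
  have hmono' : ∀ j, j ≤ m → ∀ i, i ≤ j → a i ≤ a j := by
    intro j
    induction j with
    | zero => intro _ i hi; simp [Nat.le_zero.mp hi]
    | succ n ih =>
      intro hnm i hi
      rcases Nat.lt_or_ge i (n + 1) with h' | h'
      · exact le_trans (ih (by omega) i (by omega)) (le_of_lt (hmono n (by omega)))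
      · have : i = n + 1 := by omega
        simp [this]
  have hmem : ∀ k, k ≤ m → a k ∈ Set.Icc (0 : ℝ) 1 := by
    intro k hk
    constructor
    · have := hmono' k hk 0 (Nat.zero_le _); linarith [ha0.symm.le]
    · have := hmono' m le_rfl k hk; linarith [ham.le]
  -- the step values
  set s : ℕ → ℝ := fun j => g ((a j + a (j + 1)) / 2) with hs_def
  have hmid : ∀ j < m, (a j + a (j + 1)) / 2 ∈ Set.Ioo (a j) (a (j + 1)) := by
    intro j hj
    constructor <;> nlinarith [hmono j hj]
  have hs1 : ∀ j < m, s j = 1 ∨ s j = -1 := by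
    intro j hj
    refine hg _ ?_
    have h1 := hmem j (by omega)
    have h2 := hmem (j + 1) (by omega)
    have h3 := hmid j hj
    constructor
    · linarith [h1.1, h3.1]
    · linarith [h2.2, h3.2]
  have hgval : ∀ j < m, ∀ z ∈ Set.Ioo (a j) (a (j + 1)), g z = s j := by
    intro j hj z hz
    exact hconst j hj z hz _ (hmid j hj)
  -- integrability and values on each piece
  have hint1 : ∀ j < m, IntervalIntegrable (fun z => g z * z) volume (a j) (a (j + 1)) := by
    intro j hj
    refine my_II_congr (le_of_lt (hmono j hj)) (f' := fun z => s j * z)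
      ((continuous_const.mul continuous_id).intervalIntegrable _ _) ?_
    intro z hz
    rw [hgval j hj z hz]
  have hint2 : ∀ j < m, IntervalIntegrable (fun z => g z * (z - 1)) volume (a j) (a (j + 1)) := by
    intro j hj
    refine my_II_congr (le_of_lt (hmono j hj)) (f' := fun z => s j * (z - 1))
      ((continuous_const.mul (continuous_id.sub continuous_const)).intervalIntegrable _ _) ?_
    intro z hz
    rw [hgval j hj z hz]
  set P : ℕ → ℝ := fun j => s j * ((a (j + 1)) ^ 2 - (a j) ^ 2) / 2 with hP_def
  set Q : ℕ → ℝ := fun j => s j * (a (j + 1) - a j) with hQ_def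
  have hval1 : ∀ j < m, (∫ z in a j..a (j + 1), g z * z) = P j := by
    intro j hj
    rw [my_int_congr (le_of_lt (hmono j hj)) (f' := fun z => s j * z)
      (fun z hz => by rw [hgval j hj z hz])]
    rw [intervalIntegral.integral_const_mul, integral_id]
    simp only [hP_def]
    ring
  have hval2 : ∀ j < m, (∫ z in a j..a (j + 1), g z * (z - 1)) = P j - Q j := by
    intro j hj
    rw [my_int_congr (le_of_lt (hmono j hj)) (f' := fun z => s j * (z - 1))
      (fun z hz => by rw [hgval j hj z hz])]
    rw [intervalIntegral.integral_const_mul,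
      intervalIntegral.integral_sub intervalIntegral.intervalIntegrable_id intervalIntegrable_const,
      integral_id, intervalIntegral.integral_const]
    simp only [hP_def, hQ_def, smul_eq_mul]
    ring
  set C : ℝ := ∑ j ∈ Finset.range m, P j with hC_def
  set T : ℕ → ℝ := fun k => ∑ j ∈ Finset.Ico k m, Q j with hT_def
  have hT_succ : ∀ k < m, T k = Q k + T (k + 1) := by
    intro k hk
    simp only [hT_def]
    exact Finset.sum_eq_sum_Ico_succ_bot hk _
  -- value of h at the partition points
  have hH : ∀ k, k ≤ m → h (a k) = C - T k := by
    intro k hk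
    have e1 : (∫ z in (0 : ℝ)..a k, g z * z) = ∑ j ∈ Finset.range k, P j := by
      rw [show (0 : ℝ) = a 0 from ha0.symm,
        ← intervalIntegral.sum_integral_adjacent_intervals (fun j hj => hint1 j (by omega))]
      exact Finset.sum_congr rfl fun j hj => hval1 j (by
        have := Finset.mem_range.mp hj; omega)
    have e2 : (∫ z in a k..(1 : ℝ), g z * (z - 1)) = ∑ j ∈ Finset.Ico k m, (P j - Q j) := by
      have h0 := intervalIntegral.sum_integral_adjacent_intervals_Ico (a := a)
        (f := fun z => g z * (z - 1)) (μ := volume) hk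
        (fun j hj => hint2 j hj.2)
      rw [ham] at h0
      rw [← h0]
      exact Finset.sum_congr rfl fun j hj => hval2 j (Finset.mem_Ico.mp hj).2
    rw [hh, e1, e2, Finset.sum_sub_distrib]
    have hsplitP : ∑ j ∈ Finset.range k, P j + ∑ j ∈ Finset.Ico k m, P j
        = ∑ j ∈ Finset.range m, P j := by
      rw [Finset.range_eq_Ico, Finset.range_eq_Ico]
      exact Finset.sum_Ico_consecutive P (Nat.zero_le k) hk
    simp only [hC_def, hT_def]
    linarith [hsplitP]
  -- total length is 1
  have hsumL : ∑ k ∈ Finset.range m, (a (k + 1) - a k) = 1 := by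
    rw [Finset.sum_range_sub (f := a), ha0, ham, sub_zero]
  -- summation by parts / swap
  have hswap : ∑ k ∈ Finset.range m, ((a (k + 1) - a k) * T k)
      = ∑ j ∈ Finset.range m, (a (j + 1) * Q j) := by
    have e : ∀ k ∈ Finset.range m, (a (k + 1) - a k) * T k
        = ∑ j ∈ Finset.Ico k m, ((a (k + 1) - a k) * Q j) := by
      intro k _
      simp only [hT_def]
      exact Finset.mul_sum _ _ _
    rw [Finset.sum_congr rfl e, Finset.range_eq_Ico, Finset.sum_Ico_Ico_comm]
    refine Finset.sum_congr rfl fun j hj => ?_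
    rw [← Finset.sum_mul, Nat.Ico_zero_eq_range, Finset.sum_range_sub (f := a), ha0, sub_zero]
  have h2C : ∑ j ∈ Finset.range m, (2 * (a (j + 1) * Q j))
      - ∑ j ∈ Finset.range m, ((a (j + 1) - a j) * Q j) = 2 * C := by
    rw [← Finset.sum_sub_distrib, hC_def, Finset.mul_sum]
    refine Finset.sum_congr rfl fun j _ => ?_
    simp only [hQ_def, hP_def]
    ring
  -- the key identity (∫ h = 0 in discrete form)
  have hkey : ∑ k ∈ Finset.range m, ((a (k + 1) - a k) * ((C - T k) + (C - T (k + 1)))) = 0 := by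
    have e : ∀ k ∈ Finset.range m, (a (k + 1) - a k) * ((C - T k) + (C - T (k + 1)))
        = 2 * C * (a (k + 1) - a k) - 2 * ((a (k + 1) - a k) * T k)
          + (a (k + 1) - a k) * Q k := by
      intro k hk
      have hk' := Finset.mem_range.mp hk
      linear_combination (a (k + 1) - a k) * hT_succ k hk'
    rw [Finset.sum_congr rfl e]
    rw [Finset.sum_add_distrib, Finset.sum_sub_distrib]
    have c1 : ∑ k ∈ Finset.range m, 2 * C * (a (k + 1) - a k) = 2 * C := by
      rw [← Finset.mul_sum, hsumL, mul_one]
    have c2 : ∑ k ∈ Finset.range m, 2 * ((a (k + 1) - a k) * T k)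
        = 2 * ∑ j ∈ Finset.range m, (a (j + 1) * Q j) := by
      rw [← Finset.mul_sum, hswap]
    rw [c1, c2]
    have h1 : ∑ j ∈ Finset.range m, (2 * (a (j + 1) * Q j))
        = 2 * ∑ j ∈ Finset.range m, (a (j + 1) * Q j) := by
      rw [Finset.mul_sum]
    linarith [h2C, h1]
  -- lower bound for h, and the infimum
  have habs : ∀ α ∈ Set.Icc (0 : ℝ) 1, -1 ≤ h α := by
    intro α hα
    rw [hh]
    have b1 : ‖∫ z in (0 : ℝ)..α, g z * z‖ ≤ 1 * |α - 0| := by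
      apply intervalIntegral.norm_integral_le_of_norm_le_const
      intro z hz
      rw [Set.uIoc_of_le hα.1] at hz
      have hz1 : z ∈ Set.Icc (0 : ℝ) 1 := ⟨le_of_lt hz.1, le_trans hz.2 hα.2⟩
      have hgz : |g z| = 1 := by rcases hg z hz1 with h' | h' <;> simp [h']
      rw [Real.norm_eq_abs, abs_mul, hgz, one_mul]
      exact abs_le.mpr ⟨by linarith [hz1.1], hz1.2⟩
    have b2 : ‖∫ z in α..(1 : ℝ), g z * (z - 1)‖ ≤ 1 * |1 - α| := by
      apply intervalIntegral.norm_integral_le_of_norm_le_const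
      intro z hz
      rw [Set.uIoc_of_le hα.2] at hz
      have hz1 : z ∈ Set.Icc (0 : ℝ) 1 := ⟨le_trans hα.1 (le_of_lt hz.1), hz.2⟩
      have hgz : |g z| = 1 := by rcases hg z hz1 with h' | h' <;> simp [h']
      rw [Real.norm_eq_abs, abs_mul, hgz, one_mul]
      exact abs_le.mpr ⟨by linarith [hz1.1], by linarith [hz1.2]⟩
    rw [Real.norm_eq_abs] at b1 b2
    rw [abs_of_nonneg (by linarith [hα.1] : (0:ℝ) ≤ α - 0)] at b1
    rw [abs_of_nonneg (by linarith [hα.2] : (0:ℝ) ≤ 1 - α)] at b2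
    have := (abs_le.mp b1).1
    have := (abs_le.mp b2).1
    linarith
  have hBdd : BddBelow (h '' Set.Icc (0 : ℝ) 1) := by
    refine ⟨-1, fun y hy => ?_⟩
    obtain ⟨α, hα, rfl⟩ := hy
    exact habs α hα
  have hInf_le : ∀ k, k ≤ m → -X ≤ h (a k) := by
    intro k hk
    rw [hX, neg_neg]
    exact csInf_le hBdd ⟨a k, hmem k hk, rfl⟩
  -- X ≥ 0
  have hXnn : 0 ≤ X := by
    by_contra hneg
    rw [not_le] at hneg
    have hpos : ∀ k ∈ Finset.range m,
        0 < (a (k + 1) - a k) * ((C - T k) + (C - T (k + 1))) := by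
      intro k hk
      have hk' := Finset.mem_range.mp hk
      have h1 : -X ≤ C - T k := by
        have := hInf_le k (le_of_lt hk'); rwa [hH k (le_of_lt hk')] at this
      have h2 : -X ≤ C - T (k + 1) := by
        have := hInf_le (k + 1) hk'; rwa [hH (k + 1) hk'] at this
      exact mul_pos (by linarith [hmono k hk']) (by linarith)
    have := Finset.sum_pos hpos ⟨0, Finset.mem_range.mpr (by omega)⟩
    linarith [hkey]
  -- expansion : ∑ ℓ_k (u_k + u_{k+1}) = 2X
  have hexpand : ∑ k ∈ Finset.range m,
      ((a (k + 1) - a k) * ((h (a k) + X) + (h (a (k + 1)) + X))) = 2 * X := by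
    have e : ∀ k ∈ Finset.range m,
        (a (k + 1) - a k) * ((h (a k) + X) + (h (a (k + 1)) + X))
          = (a (k + 1) - a k) * ((C - T k) + (C - T (k + 1)))
            + 2 * X * (a (k + 1) - a k) := by
      intro k hk
      have hk' := Finset.mem_range.mp hk
      rw [hH k (le_of_lt hk'), hH (k + 1) hk']
      ring
    rw [Finset.sum_congr rfl e, Finset.sum_add_distrib, hkey, ← Finset.mul_sum, hsumL]
    ring
  -- per-term lower bound
  have hterm : ∀ k ∈ Finset.range m, (a (k + 1) - a k) ^ 2
      ≤ (a (k + 1) - a k) * ((h (a k) + X) + (h (a (k + 1)) + X)) := by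
    intro k hk
    have hk' := Finset.mem_range.mp hk
    have hu : 0 ≤ h (a k) + X := by linarith [hInf_le k hk'.le]
    have hv : 0 ≤ h (a (k + 1)) + X := by linarith [hInf_le (k + 1) hk']
    have hdiff : h (a (k + 1)) - h (a k) = Q k := by
      rw [hH k hk'.le, hH (k + 1) hk']
      linear_combination hT_succ k hk'
    have hQk : Q k = s k * (a (k + 1) - a k) := by simp only [hQ_def]
    have hL : 0 < a (k + 1) - a k := by linarith [hmono k hk']
    rcases hs1 k hk' with h' | h' <;> rw [h'] at hQk <;> nlinarith [hu, hv, hdiff, hQk, hL]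
  have hmain : ∑ k ∈ Finset.range m, (a (k + 1) - a k) ^ 2 ≤ 2 * X := by
    rw [← hexpand]
    exact Finset.sum_le_sum hterm
  calc ∑ k ∈ (Finset.range m).filter (fun k => X < a (k + 1) - a k),
        (a (k + 1) - a k - X) ^ 2
      ≤ ∑ k ∈ (Finset.range m).filter (fun k => X < a (k + 1) - a k),
        (a (k + 1) - a k) ^ 2 := by
        refine Finset.sum_le_sum fun k hk => ?_
        have hlt := (Finset.mem_filter.mp hk).2
        nlinarith [hXnn, hlt]
    _ ≤ ∑ k ∈ Finset.range m, (a (k + 1) - a k) ^ 2 :=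
        Finset.sum_le_sum_of_subset_of_nonneg (Finset.filter_subset _ _)
          (fun k _ _ => sq_nonneg _)
    _ ≤ 2 * X := hmain
end

section
/- With the partition setup below, X ≥ 1/(4m); that is, if g is a ±1-valued function that is constant on each of m intervals partitioning [0,1], then −min_{α ∈ [0,1]} h(α) ≥ 1/(4m). -/
open MeasureTheory Set intervalIntegral

lemma piece_aux (g f : ℝ → ℝ) (c u v u' v' : ℝ) (hf : Continuous f)
    (hu : u ≤ u') (huv : u' ≤ v') (hv : v' ≤ v)
    (hgc : ∀ z ∈ Set.Ioo u v, g z = c) :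
    IntervalIntegrable (fun z => g z * f z) volume u' v' ∧
      (∫ z in u'..v', g z * f z) = c * ∫ z in u'..v', f z := by
  have hvne : ∀ᵐ z ∂(volume : Measure ℝ), z ≠ v := by
    have h0 : (volume : Measure ℝ) {v} = 0 := measure_singleton v
    rw [ae_iff]
    convert h0 using 2
    ext x; simp
  have key : ∀ᵐ z ∂(volume : Measure ℝ), z ∈ Set.Ioc u' v' → g z * f z = c * f z := by
    filter_upwards [hvne] with z hz hmem
    rw [hgc z ⟨lt_of_le_of_lt hu hmem.1, lt_of_le_of_ne (le_trans hmem.2 hv) hz⟩]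
  constructor
  · rw [intervalIntegrable_iff, Set.uIoc_of_le huv]
    exact ((continuous_const.mul hf).integrableOn_Ioc).congr
      ((ae_restrict_iff' measurableSet_Ioc).2 (key.mono fun z hz h => (hz h).symm))
  · rw [← intervalIntegral.integral_const_mul]
    apply intervalIntegral.integral_congr_ae
    rw [Set.uIoc_of_le huv]
    exact key

/-- with the partition setup into `m` intervals, `X ≥ 1/(4m)`, where
`X = −min_{[0,1]} h`. -/
theorem stmt_12 (m : ℕ) (hm : 1 ≤ m) (a : ℕ → ℝ)
    (ha0 : a 0 = 0) (ham : a m = 1) (hmono : ∀ k < m, a k < a (k + 1))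
    (g : ℝ → ℝ) (hg : ∀ z ∈ Set.Icc (0 : ℝ) 1, g z = 1 ∨ g z = -1)
    (hconst : ∀ k < m, ∀ z ∈ Set.Ioo (a k) (a (k + 1)),
      ∀ w ∈ Set.Ioo (a k) (a (k + 1)), g z = g w)
    (h : ℝ → ℝ)
    (hh : ∀ α, h α = (∫ z in (0 : ℝ)..α, g z * z) + ∫ z in α..(1 : ℝ), g z * (z - 1))
    (X : ℝ) (hX : X = -sInf (h '' Set.Icc (0 : ℝ) 1)) :
    X ≥ 1 / (4 * (m : ℝ)) := by
  have hm0 : (0:ℝ) < m := by exact_mod_cast hm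
  -- monotonicity of a on {0,…,m}
  have amono : ∀ j, j ≤ m → ∀ i, i ≤ j → a i ≤ a j := by
    intro j
    induction j with
    | zero => intro _ i hi; simp [Nat.le_zero.mp hi]
    | succ n ih =>
      intro hjm i hi
      rcases Nat.eq_or_lt_of_le hi with rfl | hlt
      · exact le_rfl
      · exact le_trans (ih (le_trans (Nat.le_succ n) hjm) i (Nat.lt_succ_iff.mp hlt))
          (le_of_lt (hmono n hjm))
  have ha_nonneg : ∀ k, k ≤ m → 0 ≤ a k := fun k hk => ha0 ▸ amono k hk 0 (Nat.zero_le k)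
  have ha_le1 : ∀ k, k ≤ m → a k ≤ 1 := fun k hk => ham ▸ amono m le_rfl k hk
  have haIcc : ∀ k, k ≤ m → a k ∈ Set.Icc (0:ℝ) 1 := fun k hk => ⟨ha_nonneg k hk, ha_le1 k hk⟩
  set c : ℕ → ℝ := fun k => g ((a k + a (k+1))/2) with hc_def
  have hmid : ∀ k, k < m → (a k + a (k+1))/2 ∈ Set.Ioo (a k) (a (k+1)) := by
    intro k hk
    have := hmono k hk
    constructor <;> [linarith; linarith]
  have hgc : ∀ k, k < m → ∀ z ∈ Set.Ioo (a k) (a (k+1)), g z = c k :=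
    fun k hk z hz => hconst k hk z hz _ (hmid k hk)
  have hc1 : ∀ k, k < m → c k = 1 ∨ c k = -1 := by
    intro k hk
    apply hg
    have h1 := hmid k hk
    have h2 := ha_nonneg k hk.le
    have h3 := ha_le1 (k+1) hk
    exact ⟨le_trans h2 (le_of_lt h1.1), le_trans (le_of_lt h1.2) h3⟩
  -- piecewise integrability
  have hq_piece : ∀ k, k < m → IntervalIntegrable (fun z => g z * z) volume (a k) (a (k+1)) :=
    fun k hk => (piece_aux g (fun z => z) (c k) (a k) (a (k+1)) (a k) (a (k+1)) continuous_id'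
      le_rfl (hmono k hk).le le_rfl (hgc k hk)).1
  have hr_piece : ∀ k, k < m → IntervalIntegrable (fun z => g z * (z-1)) volume (a k) (a (k+1)) :=
    fun k hk => (piece_aux g (fun z => z - 1) (c k) (a k) (a (k+1)) (a k) (a (k+1))
      (continuous_id'.sub continuous_const) le_rfl (hmono k hk).le le_rfl (hgc k hk)).1
  have hgone : (fun z => g z * 1) = g := by funext z; ring
  have hg_piece : ∀ k, k < m → IntervalIntegrable g volume (a k) (a (k+1)) := by
    intro k hk
    have := (piece_aux g (fun _ => (1:ℝ)) (c k) (a k) (a (k+1)) (a k) (a (k+1))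
      continuous_const le_rfl (hmono k hk).le le_rfl (hgc k hk)).1
    rwa [hgone] at this
  have hq01 : IntervalIntegrable (fun z => g z * z) volume 0 1 := by
    have := IntervalIntegrable.trans_iterate (a := a) (n := m) (fun k hk => hq_piece k hk)
    rwa [ha0, ham] at this
  have hr01 : IntervalIntegrable (fun z => g z * (z-1)) volume 0 1 := by
    have := IntervalIntegrable.trans_iterate (a := a) (n := m) (fun k hk => hr_piece k hk)
    rwa [ha0, ham] at this
  have hg01 : IntervalIntegrable g volume 0 1 := by
    have := IntervalIntegrable.trans_iterate (a := a) (n := m) (fun k hk => hg_piece k hk)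
    rwa [ha0, ham] at this
  have hsub : ∀ {α β : ℝ}, α ∈ Set.Icc (0:ℝ) 1 → β ∈ Set.Icc (0:ℝ) 1 → ∀ {f : ℝ → ℝ},
      IntervalIntegrable f volume 0 1 → IntervalIntegrable f volume α β := by
    intro α β hα hβ f hf
    refine hf.mono_set (Set.uIcc_subset_uIcc ?_ ?_)
    · exact Set.mem_uIcc.2 (Or.inl ⟨hα.1, hα.2⟩)
    · exact Set.mem_uIcc.2 (Or.inl ⟨hβ.1, hβ.2⟩)
  set G : ℝ → ℝ := fun t => ∫ z in (0:ℝ)..t, g z with hG_def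
  -- h t = h 0 + G t on [0,1]
  have hha : ∀ t ∈ Set.Icc (0:ℝ) 1, h t = h 0 + G t := by
    intro t ht
    have h01 : (0:ℝ) ∈ Set.Icc (0:ℝ) 1 := by norm_num
    have h11 : (1:ℝ) ∈ Set.Icc (0:ℝ) 1 := by norm_num
    have h1 : (∫ z in (0:ℝ)..t, g z * (z-1)) + (∫ z in t..(1:ℝ), g z * (z-1))
        = ∫ z in (0:ℝ)..1, g z * (z-1) :=
      intervalIntegral.integral_add_adjacent_intervals (hsub h01 ht hr01) (hsub ht h11 hr01)
    have h2 : (∫ z in (0:ℝ)..t, g z * z) - (∫ z in (0:ℝ)..t, g z * (z-1)) = G t := by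
      rw [← intervalIntegral.integral_sub (hsub h01 ht hq01) (hsub h01 ht hr01)]
      apply intervalIntegral.integral_congr
      intro z _
      ring
    rw [hh t, hh 0]
    simp only [intervalIntegral.integral_same, zero_add]
    linarith
  -- G is linear with slope c k on each piece
  have hGpiece : ∀ k, k < m → ∀ t ∈ Set.Icc (a k) (a (k+1)), G t = G (a k) + c k * (t - a k) := by
    intro k hk t ht
    have hak : a k ∈ Set.Icc (0:ℝ) 1 := haIcc k hk.le
    have hak1 : a (k+1) ∈ Set.Icc (0:ℝ) 1 := haIcc (k+1) hk
    have htI : t ∈ Set.Icc (0:ℝ) 1 := ⟨le_trans hak.1 ht.1, le_trans ht.2 hak1.2⟩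
    have h01 : (0:ℝ) ∈ Set.Icc (0:ℝ) 1 := by norm_num
    have hadd : G (a k) + (∫ z in (a k)..t, g z) = G t :=
      intervalIntegral.integral_add_adjacent_intervals (hsub h01 hak hg01) (hsub hak htI hg01)
    have hval := (piece_aux g (fun _ => (1:ℝ)) (c k) (a k) (a (k+1)) (a k) t
      continuous_const le_rfl ht.1 ht.2 (hgc k hk)).2
    simp only [mul_one, intervalIntegral.integral_const, smul_eq_mul] at hval
    rw [← hadd, hval]
  -- value of the integral of h over each piece
  have hval : ∀ k, k < m → (∫ t in (a k)..(a (k+1)), h t)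
      = (a (k+1) - a k) * (h 0 + G (a k)) + c k * (a (k+1) - a k)^2 / 2 := by
    intro k hk
    have hle := (hmono k hk).le
    have hak : a k ∈ Set.Icc (0:ℝ) 1 := haIcc k hk.le
    have hak1 : a (k+1) ∈ Set.Icc (0:ℝ) 1 := haIcc (k+1) hk
    have hlin : Set.EqOn h (fun t => (h 0 + G (a k) - c k * a k) + c k * t)
        (Set.uIcc (a k) (a (k+1))) := by
      intro t ht
      rw [Set.uIcc_of_le hle] at ht
      have htI : t ∈ Set.Icc (0:ℝ) 1 := ⟨le_trans hak.1 ht.1, le_trans ht.2 hak1.2⟩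
      rw [hha t htI, hGpiece k hk t ht]
      ring
    rw [intervalIntegral.integral_congr hlin]
    rw [intervalIntegral.integral_add (f := fun _ => h 0 + G (a k) - c k * a k)
      (g := fun x => c k * x) intervalIntegrable_const
      ((continuous_const.mul continuous_id').intervalIntegrable _ _),
      intervalIntegral.integral_const, intervalIntegral.integral_const_mul, integral_id,
      smul_eq_mul]
    ring
  -- continuity of h on [0,1]
  have hGcont : ContinuousOn G (Set.Icc (0:ℝ) 1) := by
    have := intervalIntegral.continuousOn_primitive_interval' hg01
      (by rw [Set.uIcc_of_le (zero_le_one : (0:ℝ) ≤ 1)]; norm_num : (0:ℝ) ∈ Set.uIcc (0:ℝ) 1)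
    rwa [Set.uIcc_of_le (zero_le_one : (0:ℝ) ≤ 1)] at this
  have hhcont : ContinuousOn h (Set.Icc (0:ℝ) 1) :=
    (continuousOn_const.add hGcont).congr hha
  -- h integrable on each piece
  have hh_piece : ∀ k, k < m → IntervalIntegrable h volume (a k) (a (k+1)) := by
    intro k hk
    apply ContinuousOn.intervalIntegrable
    apply hhcont.mono
    rw [Set.uIcc_of_le (hmono k hk).le]
    exact Set.Icc_subset_Icc (ha_nonneg k hk.le) (ha_le1 (k+1) hk)
  -- the minimum of h is attained
  obtain ⟨α₀, hα₀, hminOn⟩ := isCompact_Icc.exists_isMinOn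
      (Set.nonempty_Icc.2 (zero_le_one : (0:ℝ) ≤ 1)) hhcont
  have hinf : sInf (h '' Set.Icc (0:ℝ) 1) = h α₀ := by
    apply IsLeast.csInf_eq
    constructor
    · exact ⟨α₀, hα₀, rfl⟩
    · rintro y ⟨β, hβ, rfl⟩
      exact hminOn hβ
  have hlb : ∀ β ∈ Set.Icc (0:ℝ) 1, -X ≤ h β := by
    intro β hβ
    rw [hX, hinf, neg_neg]
    exact hminOn hβ
  -- ∫_0^1 h = 0
  have hP : (∫ z in (0:ℝ)..1, g z * z) = ∑ k ∈ Finset.range m, ∫ z in (a k)..(a (k+1)), g z * z := by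
    rw [intervalIntegral.sum_integral_adjacent_intervals (fun k hk => hq_piece k hk), ha0, ham]
  have hh0 : h 0 = (∫ z in (0:ℝ)..1, g z * z) - G 1 := by
    rw [hh 0]
    simp only [intervalIntegral.integral_same, zero_add]
    rw [← intervalIntegral.integral_sub hq01 hg01]
    apply intervalIntegral.integral_congr
    intro z _
    ring
  have hterm : ∀ k ∈ Finset.range m, (∫ t in (a k)..(a (k+1)), h t)
      = (a (k+1) * G (a (k+1)) - a k * G (a k)) + (a (k+1) - a k) * h 0
        - ∫ z in (a k)..(a (k+1)), g z * z := by
    intro k hk'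
    have hk := Finset.mem_range.mp hk'
    have hq := (piece_aux g (fun z => z) (c k) (a k) (a (k+1)) (a k) (a (k+1)) continuous_id'
      le_rfl (hmono k hk).le le_rfl (hgc k hk)).2
    rw [integral_id] at hq
    have hGv : G (a (k+1)) = G (a k) + c k * (a (k+1) - a k) :=
      hGpiece k hk (a (k+1)) ⟨(hmono k hk).le, le_rfl⟩
    rw [hval k hk, hq, hGv]
    ring
  have hint0 : (∫ t in (0:ℝ)..1, h t) = 0 := by
    have hsumh : (∫ t in (0:ℝ)..1, h t) = ∑ k ∈ Finset.range m, ∫ t in (a k)..(a (k+1)), h t := by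
      rw [intervalIntegral.sum_integral_adjacent_intervals (fun k hk => hh_piece k hk), ha0, ham]
    rw [hsumh, Finset.sum_congr rfl hterm]
    rw [Finset.sum_sub_distrib, Finset.sum_add_distrib, ← Finset.sum_mul,
      Finset.sum_range_sub (fun k => a k * G (a k)), Finset.sum_range_sub a, ← hP,
      ha0, ham, hh0]
    ring
  -- lower bound for the integral of h on each piece
  have hlow : ∀ k ∈ Finset.range m, (a (k+1) - a k) * (-X) + (a (k+1) - a k)^2 / 2
      ≤ ∫ t in (a k)..(a (k+1)), h t := by
    intro k hk'
    have hk := Finset.mem_range.mp hk'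
    have hle := hmono k hk
    have hGv : G (a (k+1)) = G (a k) + c k * (a (k+1) - a k) :=
      hGpiece k hk (a (k+1)) ⟨(hmono k hk).le, le_rfl⟩
    have hbk : -X ≤ h 0 + G (a k) := by
      have := hlb (a k) (haIcc k hk.le)
      rwa [hha (a k) (haIcc k hk.le)] at this
    have hbk1 : -X ≤ h 0 + G (a (k+1)) := by
      have := hlb (a (k+1)) (haIcc (k+1) hk)
      rwa [hha (a (k+1)) (haIcc (k+1) hk)] at this
    rw [hval k hk]
    rw [hGv] at hbk1
    rcases hc1 k hk with hc | hc <;> rw [hc] at hbk1 ⊢ <;> nlinarith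
  -- assemble
  have hsum : (0:ℝ) ≥ ∑ k ∈ Finset.range m, ((a (k+1) - a k) * (-X) + (a (k+1) - a k)^2 / 2) := by
    have hsumh : (∫ t in (0:ℝ)..1, h t) = ∑ k ∈ Finset.range m, ∫ t in (a k)..(a (k+1)), h t := by
      rw [intervalIntegral.sum_integral_adjacent_intervals (fun k hk => hh_piece k hk), ha0, ham]
    calc ∑ k ∈ Finset.range m, ((a (k+1) - a k) * (-X) + (a (k+1) - a k)^2 / 2)
        ≤ ∑ k ∈ Finset.range m, ∫ t in (a k)..(a (k+1)), h t := Finset.sum_le_sum hlow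
      _ = 0 := by rw [← hsumh, hint0]
  have hsum_len : ∑ k ∈ Finset.range m, (a (k+1) - a k) = 1 := by
    rw [Finset.sum_range_sub a, ha0, ham]; ring
  set S := ∑ k ∈ Finset.range m, (a (k+1) - a k)^2 with hS_def
  have hCS : (1:ℝ) ≤ m * S := by
    have := sq_sum_le_card_mul_sum_sq (s := Finset.range m) (f := fun k => a (k+1) - a k)
    rw [hsum_len] at this
    simpa using this
  have hXS : S / 2 ≤ X := by
    have : ∑ k ∈ Finset.range m, ((a (k+1) - a k) * (-X) + (a (k+1) - a k)^2 / 2)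
        = -X + S / 2 := by
      rw [Finset.sum_add_distrib, ← Finset.sum_mul, hsum_len, hS_def, ← Finset.sum_div]
      ring
    rw [this] at hsum
    linarith
  have hSm : 1/(m:ℝ) ≤ S := by
    rw [div_le_iff₀ hm0]
    linarith [hCS]
  have h2m : 1/(2*(m:ℝ)) ≤ X := by
    rw [div_le_iff₀ (by positivity)]
    rw [div_le_iff₀ hm0] at hSm
    nlinarith
  rw [ge_iff_le, div_le_iff₀ (by positivity)]
  rw [div_le_iff₀ (by positivity)] at h2m
  nlinarith
end

section
/- With D as defined below, min over 0 ≤ x ≤ 1 of D(x) is attained and is strictly negative, and every global minimizer x* of D satisfies Φ(x*) = x*, i.e. the minimum of the first variation of the energy is attained only at fixed points of the cumulative distribution function. -/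
open MeasureTheory Set intervalIntegral

lemma stmt13_measurable_sign : Measurable Real.sign := by
  unfold Real.sign
  exact Measurable.ite (measurableSet_lt measurable_id measurable_const) measurable_const
    (Measurable.ite (measurableSet_lt measurable_const measurable_id) measurable_const
      measurable_const)

lemma stmt13_abs_sign_le (x : ℝ) : |Real.sign x| ≤ 1 := by
  rcases Real.sign_apply_eq x with h | h | h <;> rw [h] <;> norm_num

lemma stmt13_II {ψ : ℝ → ℝ} (hm : AEMeasurable ψ (volume.restrict (Set.Icc (0:ℝ) 1)))
    {M : ℝ} (hb : ∀ t ∈ Set.Icc (0:ℝ) 1, |ψ t| ≤ M) {a b : ℝ}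
    (ha : a ∈ Set.Icc (0:ℝ) 1) (hbm : b ∈ Set.Icc (0:ℝ) 1) :
    IntervalIntegrable ψ volume a b := by
  have hsub : Set.uIoc a b ⊆ Set.Icc (0:ℝ) 1 :=
    (Set.uIoc_subset_uIcc).trans (Set.uIcc_subset_Icc ha hbm)
  rw [intervalIntegrable_iff]
  refine Integrable.mono' (g := fun _ => M) (integrableOn_const measure_Ioc_lt_top.ne enorm_ne_top) ?_ ?_
  · exact ((hm.mono_measure (Measure.restrict_mono hsub le_rfl)).aestronglyMeasurable)
  · exact (ae_restrict_iff' measurableSet_uIoc).2 (Filter.Eventually.of_forall fun t ht => by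
      rw [Real.norm_eq_abs]; exact hb t (hsub ht))

/-- the first variation
`D(x) = ∫_0^x sign(Φ(t)−t) Φ(t) φ(t) dt + ∫_x^1 sign(Φ(t)−t) (Φ(t)−1) φ(t) dt + |x − Φ(x)|`
attains a strictly negative minimum on `[0,1]`, and every global minimizer is a fixed point
of the cumulative distribution function `Φ`. -/
theorem stmt_13 (φ Φ : ℝ → ℝ) (c C : ℝ) (hc : 0 < c)
    (hφcont : ContinuousOn φ (Set.Icc 0 1))
    (hφ : ∀ t ∈ Set.Icc (0 : ℝ) 1, c ≤ φ t ∧ φ t ≤ C)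
    (hint : (∫ t in (0 : ℝ)..1, φ t) = 1)
    (hΦ : ∀ x ∈ Set.Icc (0 : ℝ) 1, Φ x = ∫ t in (0 : ℝ)..x, φ t)
    (hfin : {x ∈ Set.Icc (0 : ℝ) 1 | Φ x = x}.Finite)
    (D : ℝ → ℝ)
    (hD : ∀ x, D x = (∫ t in (0 : ℝ)..x, Real.sign (Φ t - t) * Φ t * φ t) +
      (∫ t in x..(1 : ℝ), Real.sign (Φ t - t) * (Φ t - 1) * φ t) + |x - Φ x|) :
    (∃ x ∈ Set.Icc (0 : ℝ) 1, (∀ y ∈ Set.Icc (0 : ℝ) 1, D x ≤ D y) ∧ D x < 0) ∧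
    ∀ x ∈ Set.Icc (0 : ℝ) 1, (∀ y ∈ Set.Icc (0 : ℝ) 1, D x ≤ D y) → Φ x = x := by
  set I : Set ℝ := Set.Icc (0:ℝ) 1 with hI
  set s : ℝ → ℝ := fun t => Real.sign (Φ t - t) with hs
  -- basic membership facts
  have h0I : (0:ℝ) ∈ I := ⟨le_refl 0, zero_le_one⟩
  have h1I : (1:ℝ) ∈ I := ⟨zero_le_one, le_refl 1⟩
  have hΦ0 : Φ 0 = 0 := by rw [hΦ 0 h0I, intervalIntegral.integral_same]
  have hΦ1 : Φ 1 = 1 := by rw [hΦ 1 h1I, hint]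
  -- integrability of φ on subintervals
  have hφi : ∀ a b : ℝ, a ∈ I → b ∈ I → IntervalIntegrable φ volume a b := by
    intro a b ha hb
    exact (hφcont.mono (Set.uIcc_subset_Icc ha hb)).intervalIntegrable
  -- Φ continuous on I
  have hφIcc : IntegrableOn φ (Set.Icc (0:ℝ) 1) volume :=
    (intervalIntegrable_iff_integrableOn_Icc_of_le zero_le_one).1 (hφi 0 1 h0I h1I)
  have hprimc : ContinuousOn (fun x => ∫ t in (0:ℝ)..x, φ t) I := by
    have := intervalIntegral.continuousOn_primitive_interval
      (a := (0:ℝ)) (b := (1:ℝ)) (μ := volume) (f := φ) (by rwa [Set.uIcc_of_le zero_le_one])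
    rwa [Set.uIcc_of_le zero_le_one] at this
  have hΦc : ContinuousOn Φ I := hprimc.congr fun x hx => hΦ x hx
  -- integral of φ over subinterval
  have hΦab : ∀ a b : ℝ, a ∈ I → b ∈ I → (∫ t in a..b, φ t) = Φ b - Φ a := by
    intro a b ha hb
    rw [hΦ a ha, hΦ b hb, eq_sub_iff_add_eq]
    rw [add_comm]
    exact intervalIntegral.integral_add_adjacent_intervals (hφi 0 a h0I ha) (hφi a b ha hb)
  -- bounds for Φ on I
  have hφ0le : ∀ t ∈ I, (0:ℝ) ≤ φ t := fun t ht => le_trans hc.le (hφ t ht).1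
  have hΦmem : ∀ x ∈ I, Φ x ∈ I := by
    intro x hx
    constructor
    · have : (0:ℝ) ≤ ∫ t in (0:ℝ)..x, φ t := by
        apply intervalIntegral.integral_nonneg hx.1
        intro u hu; exact hφ0le u ⟨hu.1, le_trans hu.2 hx.2⟩
      rwa [hΦ x hx]
    · have h2 : (0:ℝ) ≤ ∫ t in x..(1:ℝ), φ t := by
        apply intervalIntegral.integral_nonneg hx.2
        intro u hu; exact hφ0le u ⟨le_trans hx.1 hu.1, hu.2⟩
      have := hΦab x 1 hx h1I
      rw [hΦ1] at this
      have := this ▸ h2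
      linarith [hΦ x hx ▸ (le_refl (Φ x))]
  -- measurability infrastructure
  have hφm : AEMeasurable φ (volume.restrict I) := hφcont.aemeasurable measurableSet_Icc
  have hΦm : AEMeasurable Φ (volume.restrict I) := hΦc.aemeasurable measurableSet_Icc
  have hsm : AEMeasurable s (volume.restrict I) := by
    have : AEMeasurable (fun t => Φ t - t) (volume.restrict I) :=
      hΦm.sub aemeasurable_id
    exact stmt13_measurable_sign.comp_aemeasurable this
  -- integrability of the integrands
  have hgi : ∀ a b : ℝ, a ∈ I → b ∈ I →
      IntervalIntegrable (fun t => s t * φ t) volume a b := by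
    intro a b ha hb
    refine stmt13_II (hsm.mul hφm) (M := max C 0) ?_ ha hb
    intro t ht
    simp only [Pi.mul_apply]; rw [abs_mul]
    calc |s t| * |φ t| ≤ 1 * max C 0 := by
          apply mul_le_mul (stmt13_abs_sign_le _) ?_ (abs_nonneg _) zero_le_one
          rw [abs_of_nonneg (hφ0le t ht)]
          exact le_max_of_le_left (hφ t ht).2
      _ = max C 0 := one_mul _
  have hg1i : ∀ a b : ℝ, a ∈ I → b ∈ I →
      IntervalIntegrable (fun t => s t * Φ t * φ t) volume a b := by
    intro a b ha hb
    refine stmt13_II ((hsm.mul hΦm).mul hφm) (M := max C 0) ?_ ha hb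
    intro t ht
    simp only [Pi.mul_apply]; rw [abs_mul, abs_mul]
    have h1 : |s t| * |Φ t| ≤ 1 := by
      have := hΦmem t ht
      have hb2 : |Φ t| ≤ 1 := by rw [abs_of_nonneg this.1]; exact this.2
      calc |s t| * |Φ t| ≤ 1 * 1 :=
            mul_le_mul (stmt13_abs_sign_le _) hb2 (abs_nonneg _) zero_le_one
        _ = 1 := one_mul 1
    calc |s t| * |Φ t| * |φ t| ≤ 1 * max C 0 := by
          apply mul_le_mul h1 ?_ (abs_nonneg _) zero_le_one
          rw [abs_of_nonneg (hφ0le t ht)]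
          exact le_max_of_le_left (hφ t ht).2
      _ = max C 0 := one_mul _
  have hg2i : ∀ a b : ℝ, a ∈ I → b ∈ I →
      IntervalIntegrable (fun t => s t * (Φ t - 1) * φ t) volume a b := by
    intro a b ha hb
    refine stmt13_II ((hsm.mul (hΦm.sub aemeasurable_const)).mul hφm) (M := max C 0) ?_ ha hb
    intro t ht
    simp only [Pi.mul_apply, Pi.sub_apply]; rw [abs_mul, abs_mul]
    have h1 : |s t| * |Φ t - 1| ≤ 1 := by
      have := hΦmem t ht
      have hb2 : |Φ t - 1| ≤ 1 := by rw [abs_of_nonpos (by linarith [this.2])]; linarith [this.1]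
      calc |s t| * |Φ t - 1| ≤ 1 * 1 :=
            mul_le_mul (stmt13_abs_sign_le _) hb2 (abs_nonneg _) zero_le_one
        _ = 1 := one_mul 1
    calc |s t| * |Φ t - 1| * |φ t| ≤ 1 * max C 0 := by
          apply mul_le_mul h1 ?_ (abs_nonneg _) zero_le_one
          rw [abs_of_nonneg (hφ0le t ht)]
          exact le_max_of_le_left (hφ t ht).2
      _ = max C 0 := one_mul _
  -- difference formula for D
  have hDdiff : ∀ a b : ℝ, a ∈ I → b ∈ I →
      D b - D a = (∫ t in a..b, s t * φ t) + |b - Φ b| - |a - Φ a| := by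
    intro a b ha hb
    have e1 := intervalIntegral.integral_add_adjacent_intervals (hg1i 0 a h0I ha)
      (hg1i a b ha hb)
    have e2 := intervalIntegral.integral_add_adjacent_intervals (hg2i a b ha hb)
      (hg2i b 1 hb h1I)
    have e3 : (∫ t in a..b, s t * Φ t * φ t) - (∫ t in a..b, s t * (Φ t - 1) * φ t)
        = ∫ t in a..b, s t * φ t := by
      rw [← intervalIntegral.integral_sub (hg1i a b ha hb) (hg2i a b ha hb)]
      apply intervalIntegral.integral_congr
      intro t _
      ring
    rw [hD a, hD b]
    linarith
  -- nearest fixed point from below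
  have lemA : ∀ x ∈ I, x < Φ x → ∃ a, a ∈ I ∧ Φ a = a ∧ a < x ∧
      (∫ t in a..x, s t * φ t) = Φ x - a := by
    intro x hx hgt
    set S : Set ℝ := {t | t ∈ Set.Icc 0 x ∧ Φ t = t} with hSdef
    have hsub : Set.Icc (0:ℝ) x ⊆ I := Set.Icc_subset_Icc le_rfl hx.2
    have hScl : IsClosed S := by
      have hcont : ContinuousOn (fun t => Φ t - t) (Set.Icc (0:ℝ) x) :=
        (hΦc.mono hsub).sub continuousOn_id
      have hEq : S = Set.Icc 0 x ∩ (fun t => Φ t - t) ⁻¹' {0} := by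
        ext t
        simp only [hSdef, Set.mem_setOf_eq, Set.mem_inter_iff, Set.mem_preimage,
          Set.mem_singleton_iff, sub_eq_zero]
      rw [hEq]
      exact hcont.preimage_isClosed_of_isClosed isClosed_Icc isClosed_singleton
    have hScomp : IsCompact S :=
      IsCompact.of_isClosed_subset isCompact_Icc hScl (fun t ht => ht.1)
    have hSne : S.Nonempty := ⟨0, ⟨le_refl 0, hx.1⟩, hΦ0⟩
    obtain ⟨haS⟩ : ∃ _ : sSup S ∈ S, True := ⟨hScomp.sSup_mem hSne, trivial⟩
    set a := sSup S with hadef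
    have haI : a ∈ I := hsub haS.1
    have hafix : Φ a = a := haS.2
    have hax : a < x := by
      rcases lt_or_eq_of_le haS.1.2 with h | h
      · exact h
      · exfalso; rw [h] at hafix; exact absurd hafix (ne_of_gt hgt)
    have hle : ∀ t ∈ S, t ≤ a := fun t ht => le_csSup hScomp.bddAbove ht
    have hpos : ∀ t ∈ Set.Ioc a x, t < Φ t := by
      intro t ht
      rcases lt_trichotomy t (Φ t) with h | h | h
      · exact h
      · exfalso
        have : t ∈ S := ⟨⟨le_trans haI.1 ht.1.le, ht.2⟩, h.symm⟩
        exact absurd (hle t this) (not_le.2 ht.1)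
      · exfalso
        have htx : t < x := by
          rcases lt_or_eq_of_le ht.2 with h2 | h2
          · exact h2
          · exfalso; rw [h2] at h; exact absurd hgt (not_lt.2 h.le)
        have hIcc2 : Set.Icc t x ⊆ I := Set.Icc_subset_Icc (le_trans haI.1 ht.1.le) hx.2
        have hcont2 : ContinuousOn (fun u => Φ u - u) (Set.Icc t x) :=
          (hΦc.mono hIcc2).sub continuousOn_id
        have h0mem : (0:ℝ) ∈ Set.Icc (Φ t - t) (Φ x - x) := ⟨by linarith, by linarith⟩
        obtain ⟨z, hz, hz0⟩ := intermediate_value_Icc htx.le hcont2 h0mem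
        have hzfix : Φ z = z := by have := sub_eq_zero.1 hz0; linarith
        have hzS : z ∈ S := ⟨⟨le_trans (le_trans haI.1 ht.1.le) hz.1, hz.2⟩, hzfix⟩
        have := hle z hzS
        linarith [hz.1, ht.1]
    refine ⟨a, haI, hafix, hax, ?_⟩
    have heq : (∫ t in a..x, s t * φ t) = ∫ t in a..x, φ t := by
      apply intervalIntegral.integral_congr_ae
      apply Filter.Eventually.of_forall
      intro t ht
      rw [Set.uIoc_of_le hax.le] at ht
      have h1 : s t = 1 := Real.sign_of_pos (by linarith [hpos t ht])
      rw [h1, one_mul]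
    rw [heq, hΦab a x haI hx, hafix]
  -- nearest fixed point from above
  have lemB : ∀ x ∈ I, Φ x < x → ∃ b, b ∈ I ∧ Φ b = b ∧ x < b ∧
      (∫ t in x..b, s t * φ t) = Φ x - b := by
    intro x hx hlt
    set S : Set ℝ := {t | t ∈ Set.Icc x 1 ∧ Φ t = t} with hSdef
    have hsub : Set.Icc x (1:ℝ) ⊆ I := Set.Icc_subset_Icc hx.1 le_rfl
    have hScl : IsClosed S := by
      have hcont : ContinuousOn (fun t => Φ t - t) (Set.Icc x (1:ℝ)) :=
        (hΦc.mono hsub).sub continuousOn_id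
      have hEq : S = Set.Icc x 1 ∩ (fun t => Φ t - t) ⁻¹' {0} := by
        ext t
        simp only [hSdef, Set.mem_setOf_eq, Set.mem_inter_iff, Set.mem_preimage,
          Set.mem_singleton_iff, sub_eq_zero]
      rw [hEq]
      exact hcont.preimage_isClosed_of_isClosed isClosed_Icc isClosed_singleton
    have hScomp : IsCompact S :=
      IsCompact.of_isClosed_subset isCompact_Icc hScl (fun t ht => ht.1)
    have hSne : S.Nonempty := ⟨1, ⟨hx.2, le_refl 1⟩, hΦ1⟩
    obtain ⟨hbS⟩ : ∃ _ : sInf S ∈ S, True := ⟨hScomp.sInf_mem hSne, trivial⟩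
    set b := sInf S with hbdef
    have hbI : b ∈ I := hsub hbS.1
    have hbfix : Φ b = b := hbS.2
    have hxb : x < b := by
      rcases lt_or_eq_of_le hbS.1.1 with h | h
      · exact h
      · exfalso; rw [← h] at hbfix; exact absurd hbfix (ne_of_lt hlt)
    have hle : ∀ t ∈ S, b ≤ t := fun t ht => csInf_le hScomp.bddBelow ht
    have hneg : ∀ t ∈ Set.Ico x b, Φ t < t := by
      intro t ht
      rcases lt_trichotomy (Φ t) t with h | h | h
      · exact h
      · exfalso
        have : t ∈ S := ⟨⟨ht.1, le_trans ht.2.le hbI.2⟩, h⟩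
        exact absurd (hle t this) (not_le.2 ht.2)
      · exfalso
        have hxt : x < t := by
          rcases lt_or_eq_of_le ht.1 with h2 | h2
          · exact h2
          · exfalso; rw [← h2] at h; exact absurd hlt (not_lt.2 h.le)
        have hIcc2 : Set.Icc x t ⊆ I := Set.Icc_subset_Icc hx.1 (le_trans ht.2.le hbI.2)
        have hcont2 : ContinuousOn (fun u => Φ u - u) (Set.Icc x t) :=
          (hΦc.mono hIcc2).sub continuousOn_id
        have h0mem : (0:ℝ) ∈ Set.Icc (Φ x - x) (Φ t - t) := ⟨by linarith, by linarith⟩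
        obtain ⟨z, hz, hz0⟩ := intermediate_value_Icc hxt.le hcont2 h0mem
        have hzfix : Φ z = z := by have := sub_eq_zero.1 hz0; linarith
        have hzS : z ∈ S := ⟨⟨hz.1, le_trans hz.2 (le_trans ht.2.le hbI.2)⟩, hzfix⟩
        have := hle z hzS
        linarith [hz.2, ht.2]
    refine ⟨b, hbI, hbfix, hxb, ?_⟩
    have heq : (∫ t in x..b, s t * φ t) = ∫ t in x..b, -φ t := by
      apply intervalIntegral.integral_congr_ae
      have hbnull : {b}ᶜ ∈ MeasureTheory.ae (volume : Measure ℝ) :=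
        MeasureTheory.compl_mem_ae_iff.2 (measure_singleton b)
      filter_upwards [hbnull] with t htb htI
      rw [Set.uIoc_of_le hxb.le] at htI
      have htb' : t ≠ b := htb
      have htIco : t ∈ Set.Ico x b := ⟨htI.1.le, lt_of_le_of_ne htI.2 htb'⟩
      have h1 : s t = -1 := Real.sign_of_neg (by linarith [hneg t htIco])
      rw [h1]; ring
    rw [heq, intervalIntegral.integral_neg, hΦab x b hx hbI, hbfix]
    ring
  -- Part 2 : every minimizer is a fixed point
  have part2 : ∀ x ∈ I, (∀ y ∈ I, D x ≤ D y) → Φ x = x := by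
    intro x hx hmin
    by_contra hne
    rcases lt_or_gt_of_ne hne with hlt | hgt
    · -- Φ x < x
      obtain ⟨b, hbI, hbfix, hxb, hib⟩ := lemB x hx hlt
      have hd := hDdiff x b hx hbI
      rw [hib] at hd
      have h1 : |b - Φ b| = 0 := by rw [hbfix]; simp
      have h2 : |x - Φ x| = x - Φ x := abs_of_pos (by linarith)
      have : D b < D x := by rw [sub_eq_iff_eq_add] at hd; rw [hd, h1, h2]; linarith
      exact absurd (hmin b hbI) (not_le.2 this)
    · -- x < Φ x
      obtain ⟨a, haI, hafix, hax, hia⟩ := lemA x hx hgt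
      have hd := hDdiff a x haI hx
      rw [hia] at hd
      have h1 : |a - Φ a| = 0 := by rw [hafix]; simp
      have h2 : |x - Φ x| = Φ x - x := by rw [abs_of_neg (by linarith)]; ring
      have : D a < D x := by
        rw [sub_eq_iff_eq_add] at hd
        rw [hd, h1, h2]
        have : a ≤ x := le_of_lt hax
        linarith
      exact absurd (hmin a haI) (not_le.2 this)
  -- continuity of D on I
  have hDc : ContinuousOn D I := by
    have hc1 : ContinuousOn (fun x => ∫ t in (0:ℝ)..x, s t * Φ t * φ t) I := by
      have := intervalIntegral.continuousOn_primitive_interval' (hg1i 0 1 h0I h1I)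
        (Set.left_mem_uIcc)
      rwa [Set.uIcc_of_le zero_le_one] at this
    have hc2 : ContinuousOn (fun x => ∫ t in (0:ℝ)..x, s t * (Φ t - 1) * φ t) I := by
      have := intervalIntegral.continuousOn_primitive_interval' (hg2i 0 1 h0I h1I)
        (Set.left_mem_uIcc)
      rwa [Set.uIcc_of_le zero_le_one] at this
    have habsc : ContinuousOn (fun x => |x - Φ x|) I := (continuousOn_id.sub hΦc).abs
    have hgc : ContinuousOn (fun x => (∫ t in (0:ℝ)..x, s t * Φ t * φ t) +
        ((∫ t in (0:ℝ)..1, s t * (Φ t - 1) * φ t) -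
          (∫ t in (0:ℝ)..x, s t * (Φ t - 1) * φ t)) + |x - Φ x|) I :=
      (hc1.add (continuousOn_const.sub hc2)).add habsc
    apply hgc.congr
    intro x hx
    have hadd := intervalIntegral.integral_add_adjacent_intervals (hg2i 0 x h0I hx)
      (hg2i x 1 hx h1I)
    rw [hD x]
    have : (∫ t in x..(1:ℝ), s t * (Φ t - 1) * φ t) =
        (∫ t in (0:ℝ)..1, s t * (Φ t - 1) * φ t) -
          (∫ t in (0:ℝ)..x, s t * (Φ t - 1) * φ t) := by linarith
    rw [this]
  -- R and its maximizer
  set R : ℝ → ℝ := fun x => ∫ t in x..(1:ℝ), s t * φ t with hR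
  have hRc : ContinuousOn R I := by
    have hgIcc : IntegrableOn (fun t => s t * φ t) (Set.uIcc (0:ℝ) 1) volume := by
      rw [Set.uIcc_of_le zero_le_one]
      exact (intervalIntegrable_iff_integrableOn_Icc_of_le zero_le_one).1 (hgi 0 1 h0I h1I)
    have := intervalIntegral.continuousOn_primitive_interval_left hgIcc
    rwa [Set.uIcc_of_le zero_le_one] at this
  have hRdiff : ∀ a b : ℝ, a ∈ I → b ∈ I → R a - R b = ∫ t in a..b, s t * φ t := by
    intro a b ha hb
    have := intervalIntegral.integral_add_adjacent_intervals (hgi a b ha hb) (hgi b 1 hb h1I)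
    simp only [hR]
    linarith [this]
  obtain ⟨xb, hxbI, hxbmax⟩ := isCompact_Icc.exists_isMaxOn ⟨0, h0I⟩ hRc
  have hxbmax' : ∀ y ∈ I, R y ≤ R xb := fun y hy => hxbmax hy
  -- the maximizer of R is a fixed point
  have hxbfix : Φ xb = xb := by
    by_contra hne
    rcases lt_or_gt_of_ne hne with hlt | hgt
    · obtain ⟨b, hbI, hbfix, hxb2, hib⟩ := lemB xb hxbI hlt
      have := hRdiff xb b hxbI hbI
      rw [hib] at this
      have : R xb < R b := by linarith
      exact absurd (hxbmax' b hbI) (not_le.2 this)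
    · obtain ⟨a, haI, hafix, hax, hia⟩ := lemA xb hxbI hgt
      have := hRdiff a xb haI hxbI
      rw [hia] at this
      have : R xb < R a := by linarith
      exact absurd (hxbmax' a haI) (not_le.2 this)
  -- strictness: ∫ R φ < R xb
  have hstrict : (∫ t in (0:ℝ)..1, R t * φ t) < R xb := by
    -- find a non-fixed point y in (0,1)
    have hIooInf : (Set.Ioo (0:ℝ) 1).Infinite := Set.Ioo_infinite zero_lt_one
    obtain ⟨y, hy⟩ := (hIooInf.diff hfin).nonempty
    have hyIoo : y ∈ Set.Ioo (0:ℝ) 1 := hy.1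
    have hyI : y ∈ I := ⟨hyIoo.1.le, hyIoo.2.le⟩
    have hyne : Φ y ≠ y := fun h => hy.2 ⟨hyI, h⟩
    -- R y < R xb
    have hRy : R y < R xb := by
      rcases lt_or_gt_of_ne hyne with hlt | hgt
      · obtain ⟨b, hbI, hbfix, hyb, hib⟩ := lemB y hyI hlt
        have := hRdiff y b hyI hbI
        rw [hib] at this
        have h2 : R y < R b := by linarith
        exact lt_of_lt_of_le h2 (hxbmax' b hbI)
      · obtain ⟨a, haI, hafix, hay, hia⟩ := lemA y hyI hgt
        have := hRdiff a y haI hyI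
        rw [hia] at this
        have h2 : R y < R a := by linarith
        exact lt_of_lt_of_le h2 (hxbmax' a haI)
    set ε : ℝ := (R xb - R y) / 2 with hε
    have hεpos : 0 < ε := by simp only [hε]; linarith
    -- continuity at y gives a small interval where R < R y + ε
    have hIccnhds : I ∈ nhds y := Icc_mem_nhds hyIoo.1 hyIoo.2
    have hRca : ContinuousAt R y := hRc.continuousAt hIccnhds
    have hev : R ⁻¹' Set.Iio (R y + ε) ∈ nhds y :=
      hRca.preimage_mem_nhds (Iio_mem_nhds (by linarith))
    have hnb : R ⁻¹' Set.Iio (R y + ε) ∩ Set.Ioo 0 1 ∈ nhds y :=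
      Filter.inter_mem hev (Ioo_mem_nhds hyIoo.1 hyIoo.2)
    obtain ⟨δ, hδpos, hball⟩ := Metric.mem_nhds_iff.1 hnb
    set p : ℝ := y - δ / 2 with hp
    set q : ℝ := y + δ / 2 with hq
    have hpq : p < q := by simp only [hp, hq]; linarith
    have hmem : ∀ t ∈ Set.Icc p q, t ∈ R ⁻¹' Set.Iio (R y + ε) ∩ Set.Ioo 0 1 := by
      intro t ht
      apply hball
      rw [Metric.mem_ball, Real.dist_eq]
      rw [abs_lt]
      constructor
      · simp only [hp] at ht; linarith [ht.1]
      · simp only [hq] at ht; linarith [ht.2]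
    have hpI : p ∈ I := by
      have := (hmem p ⟨le_refl p, hpq.le⟩).2
      exact ⟨this.1.le, this.2.le⟩
    have hqI : q ∈ I := by
      have := (hmem q ⟨hpq.le, le_refl q⟩).2
      exact ⟨this.1.le, this.2.le⟩
    -- the function (R xb - R t) * φ t
    have hhc : ContinuousOn (fun t => (R xb - R t) * φ t) I :=
      (continuousOn_const.sub hRc).mul hφcont
    have hhi : ∀ a b : ℝ, a ∈ I → b ∈ I →
        IntervalIntegrable (fun t => (R xb - R t) * φ t) volume a b := fun a b ha hb =>
      (hhc.mono (Set.uIcc_subset_Icc ha hb)).intervalIntegrable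
    have hsplit := intervalIntegral.integral_add_adjacent_intervals (hhi 0 p h0I hpI)
      (hhi p q hpI hqI)
    have hmid : 0 < ∫ t in p..q, (R xb - R t) * φ t := by
      apply intervalIntegral.intervalIntegral_pos_of_pos_on (hhi p q hpI hqI) _ hpq
      intro t ht
      have htmem := hmem t ⟨ht.1.le, ht.2.le⟩
      have h1 : R t < R y + ε := htmem.1
      have h2 : 0 < R xb - R t := by simp only [hε] at h1 ⊢; linarith
      have htI : t ∈ I := ⟨htmem.2.1.le, htmem.2.2.le⟩
      exact mul_pos h2 (lt_of_lt_of_le hc (hφ t htI).1)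
    have hleft : 0 ≤ ∫ t in (0:ℝ)..p, (R xb - R t) * φ t := by
      apply intervalIntegral.integral_nonneg hpI.1
      intro u hu
      have huI : u ∈ I := ⟨hu.1, le_trans hu.2 hpI.2⟩
      exact mul_nonneg (sub_nonneg.2 (hxbmax' u huI)) (hφ0le u huI)
    have hright : 0 ≤ ∫ t in q..(1:ℝ), (R xb - R t) * φ t := by
      apply intervalIntegral.integral_nonneg hqI.2
      intro u hu
      have huI : u ∈ I := ⟨le_trans hqI.1 hu.1, hu.2⟩
      exact mul_nonneg (sub_nonneg.2 (hxbmax' u huI)) (hφ0le u huI)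
    have htot : 0 < ∫ t in (0:ℝ)..1, (R xb - R t) * φ t := by
      have e1 := intervalIntegral.integral_add_adjacent_intervals (hhi 0 q h0I hqI)
        (hhi q 1 hqI h1I)
      linarith [hsplit, e1]
    -- rewrite: ∫ (R xb - R t) φ t = R xb - ∫ R φ
    have hRφi : IntervalIntegrable (fun t => R t * φ t) volume 0 1 :=
      ((hRc.mul hφcont).mono (Set.uIcc_subset_Icc h0I h1I)).intervalIntegrable
    have hconsti : IntervalIntegrable (fun t => R xb * φ t) volume 0 1 :=
      ((continuousOn_const.mul hφcont).mono (Set.uIcc_subset_Icc h0I h1I)).intervalIntegrable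
    have hdecomp : (∫ t in (0:ℝ)..1, (R xb - R t) * φ t) =
        (∫ t in (0:ℝ)..1, R xb * φ t) - ∫ t in (0:ℝ)..1, R t * φ t := by
      rw [← intervalIntegral.integral_sub hconsti hRφi]
      apply intervalIntegral.integral_congr
      intro t _
      ring
    have hconstval : (∫ t in (0:ℝ)..1, R xb * φ t) = R xb := by
      rw [intervalIntegral.integral_const_mul, hint, mul_one]
    rw [hdecomp, hconstval] at htot
    linarith
  -- integration by parts
  have hIBP : (∫ t in (0:ℝ)..1, s t * Φ t * φ t) = ∫ t in (0:ℝ)..1, R t * φ t := by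
    set G : ℝ → ℝ := fun x => Φ x * R x with hG
    set G' : ℝ → ℝ := fun x => φ x * R x + Φ x * (-(s x * φ x)) with hG'
    -- derivative off the (finite) fixed-point set
    have Hd : ∀ x ∈ Set.Ioo (min (0:ℝ) 1) (max (0:ℝ) 1) \ {x ∈ I | Φ x = x},
        HasDerivAt G (G' x) x := by
      intro x hx
      rw [min_eq_left zero_le_one, max_eq_right zero_le_one] at hx
      obtain ⟨hxIoo, hxnf⟩ := hx
      have hxI : x ∈ I := ⟨hxIoo.1.le, hxIoo.2.le⟩
      have hxne : Φ x ≠ x := fun h => hxnf ⟨hxI, h⟩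
      have hnhds : I ∈ nhds x := Icc_mem_nhds hxIoo.1 hxIoo.2
      -- derivative of Φ
      have hφca : ContinuousAt φ x := hφcont.continuousAt hnhds
      have hmesφ : StronglyMeasurableAtFilter φ (nhds x) volume :=
        ⟨I, hnhds, hφm.aestronglyMeasurable⟩
      have hprimΦ : HasDerivAt (fun u => ∫ t in (0:ℝ)..u, φ t) (φ x) x :=
        intervalIntegral.integral_hasDerivAt_right (hφi 0 x h0I hxI) hmesφ hφca
      have hΦder : HasDerivAt Φ (φ x) x := by
        apply hprimΦ.congr_of_eventuallyEq
        exact Filter.eventuallyEq_of_mem hnhds (fun u hu => hΦ u hu)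
      -- continuity of s*φ at x
      have hsubca : ContinuousAt (fun t => Φ t - t) x :=
        (hΦc.continuousAt hnhds).sub continuousAt_id
      have hgca : ContinuousAt (fun t => s t * φ t) x := by
        rcases lt_or_gt_of_ne hxne with hl | hg
        · -- Φ x - x < 0, s = -1 near x
          have hev : ∀ᶠ t in nhds x, Φ t - t < 0 := by
            have := hsubca.preimage_mem_nhds (Iio_mem_nhds (by linarith : Φ x - x < 0))
            filter_upwards [this] with t ht using ht
          have heq : (fun t => -φ t) =ᶠ[nhds x] (fun t => s t * φ t) := by
            filter_upwards [hev] with t ht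
            rw [show s t = -1 from Real.sign_of_neg ht]; ring
          exact ContinuousAt.congr hφca.neg heq
        · have hev : ∀ᶠ t in nhds x, 0 < Φ t - t := by
            have := hsubca.preimage_mem_nhds (Ioi_mem_nhds (by linarith : 0 < Φ x - x))
            filter_upwards [this] with t ht using ht
          have heq : (fun t => φ t) =ᶠ[nhds x] (fun t => s t * φ t) := by
            filter_upwards [hev] with t ht
            rw [show s t = 1 from Real.sign_of_pos ht]; ring
          exact ContinuousAt.congr hφca heq
      -- derivative of R
      have hmesg : StronglyMeasurableAtFilter (fun t => s t * φ t) (nhds x) volume :=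
        ⟨I, hnhds, (hsm.mul hφm).aestronglyMeasurable⟩
      have hprimg : HasDerivAt (fun u => ∫ t in (0:ℝ)..u, s t * φ t) (s x * φ x) x :=
        intervalIntegral.integral_hasDerivAt_right (hgi 0 x h0I hxI) hmesg hgca
      have hRder : HasDerivAt R (-(s x * φ x)) x := by
        have h2 : HasDerivAt (fun u => (∫ t in (0:ℝ)..1, s t * φ t) -
            ∫ t in (0:ℝ)..u, s t * φ t) (-(s x * φ x)) x := hprimg.const_sub _
        apply h2.congr_of_eventuallyEq
        apply Filter.eventuallyEq_of_mem hnhds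
        intro u hu
        have := intervalIntegral.integral_add_adjacent_intervals (hgi 0 u h0I hu)
          (hgi u 1 hu h1I)
        simp only [hR]
        linarith
      have := hΦder.mul hRder
      exact this
    -- continuity of G
    have Hc : ContinuousOn G (Set.uIcc (0:ℝ) 1) := by
      rw [Set.uIcc_of_le zero_le_one]
      exact hΦc.mul hRc
    -- integrability of G'
    have hi1 : IntervalIntegrable (fun t => φ t * R t) volume 0 1 :=
      ((hφcont.mul hRc).mono (Set.uIcc_subset_Icc h0I h1I)).intervalIntegrable
    have hi2 : IntervalIntegrable (fun t => Φ t * (-(s t * φ t))) volume 0 1 := by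
      refine stmt13_II (hΦm.mul ((hsm.mul hφm).neg)) (M := max C 0) ?_ h0I h1I
      intro t ht
      simp only [Pi.mul_apply, Pi.neg_apply]; rw [abs_mul, abs_neg, abs_mul]
      have hΦb : |Φ t| ≤ 1 := by
        have := hΦmem t ht
        rw [abs_of_nonneg this.1]; exact this.2
      have hφb : |φ t| ≤ max C 0 := by
        rw [abs_of_nonneg (hφ0le t ht)]
        exact le_max_of_le_left (hφ t ht).2
      calc |Φ t| * (|s t| * |φ t|) ≤ 1 * (1 * max C 0) := by
            apply mul_le_mul hΦb _ (by positivity) zero_le_one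
            exact mul_le_mul (stmt13_abs_sign_le _) hφb (abs_nonneg _) zero_le_one
        _ = max C 0 := by ring
    have Hi : IntervalIntegrable G' volume 0 1 := hi1.add hi2
    have key := MeasureTheory.integral_eq_of_hasDerivAt_off_countable G G'
      hfin.countable Hc Hd Hi
    have hG1 : G 1 = 0 := by
      simp only [hG, hR]
      rw [intervalIntegral.integral_same, mul_zero]
    have hG0 : G 0 = 0 := by simp only [hG, hΦ0, zero_mul]
    rw [hG1, hG0, sub_zero] at key
    -- split the integral of G'
    have hsplitG := intervalIntegral.integral_add hi1 hi2
    have e2 : (∫ t in (0:ℝ)..1, Φ t * (-(s t * φ t))) =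
        -∫ t in (0:ℝ)..1, s t * Φ t * φ t := by
      rw [← intervalIntegral.integral_neg]
      apply intervalIntegral.integral_congr
      intro t _
      ring
    have e1 : (∫ t in (0:ℝ)..1, φ t * R t) = ∫ t in (0:ℝ)..1, R t * φ t := by
      apply intervalIntegral.integral_congr
      intro t _
      ring
    have : (∫ t in (0:ℝ)..1, G' t) = (∫ t in (0:ℝ)..1, φ t * R t) +
        ∫ t in (0:ℝ)..1, Φ t * (-(s t * φ t)) := hsplitG
    rw [key] at this
    rw [e1, e2] at this
    linarith
  -- value of D at fixed points
  have hDfix : ∀ z ∈ I, Φ z = z → D z = (∫ t in (0:ℝ)..1, s t * Φ t * φ t) - R z := by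
    intro z hz hzfix
    have hadd := intervalIntegral.integral_add_adjacent_intervals (hg1i 0 z h0I hz)
      (hg1i z 1 hz h1I)
    have hsub : (∫ t in z..(1:ℝ), s t * (Φ t - 1) * φ t) - (∫ t in z..(1:ℝ), s t * Φ t * φ t)
        = - R z := by
      rw [← intervalIntegral.integral_sub (hg2i z 1 hz h1I) (hg1i z 1 hz h1I), hR]
      rw [← intervalIntegral.integral_neg]
      apply intervalIntegral.integral_congr
      intro t _
      ring
    have habs : |z - Φ z| = 0 := by rw [hzfix]; simp
    rw [hD z, habs]
    rw [← hadd]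
    linarith [hsub]
  -- minimizer of D
  obtain ⟨xs, hxsI, hxsmin⟩ := isCompact_Icc.exists_isMinOn ⟨0, h0I⟩ hDc
  have hxsmin' : ∀ y ∈ I, D xs ≤ D y := fun y hy => hxsmin hy
  have hDxb : D xb < 0 := by
    rw [hDfix xb hxbI hxbfix, hIBP]
    linarith
  exact ⟨⟨xs, hxsI, hxsmin', lt_of_le_of_lt (hxsmin' xb hxbI) hDxb⟩, part2⟩
end
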